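/- For the compressible Neo-Hookean type stress law σ̂(B) = (1/√det B)·(B − I): if σ̂(B) is a pure shear stress s(e1⊗e2+e2⊗e1) with B of the commuting form [[p,q,0],[q,p,0],[0,0,r]], then necessarily r = 1, p = 1 and q = s/√(1+s²); consequently det B = 1/(1+s²) < 1 for s ≠ 0, so the deformation is planar but not volume preserving. -/

import Mathlib

open Matrix

/-- The pure shear stress tensor `s (e1⊗e2 + e2⊗e1)`. -/
noncomputable def pureShear (s : ℝ) : Matrix (Fin 3) (Fin 3) ℝ :=
  !![0, s, 0; s, 0, 0; 0, 0, 0]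

/-- For the stress law `σ̂(B) = (1/√det B)(B − I)`: a pure shear Cauchy stress with
`B = [[p,q,0],[q,p,0],[0,0,r]]` forces `r = 1`, `p = 1`, `q = s/√(1+s²)`; hence
`det B = 1/(1+s²) < 1` for `s ≠ 0`: planar but not volume preserving. -/
theorem neo_hookean_pure_shear (p q r s : ℝ)
    (hB : (!![p, q, 0; q, p, 0; 0, 0, r] : Matrix (Fin 3) (Fin 3) ℝ).PosDef)
    (hσ : (1 / Real.sqrt ((!![p, q, 0; q, p, 0; 0, 0, r] : Matrix (Fin 3) (Fin 3) ℝ).det)) •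
        ((!![p, q, 0; q, p, 0; 0, 0, r] : Matrix (Fin 3) (Fin 3) ℝ) - 1) = pureShear s) :
    r = 1 ∧ p = 1 ∧ q = s / Real.sqrt (1 + s ^ 2) ∧
    (s ≠ 0 →
      (!![p, q, 0; q, p, 0; 0, 0, r] : Matrix (Fin 3) (Fin 3) ℝ).det = 1 / (1 + s ^ 2) ∧
      (!![p, q, 0; q, p, 0; 0, 0, r] : Matrix (Fin 3) (Fin 3) ℝ).det < 1) := by
  have hd : 0 < (!![p, q, 0; q, p, 0; 0, 0, r] : Matrix (Fin 3) (Fin 3) ℝ).det := hB.det_pos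
  set d := (!![p, q, 0; q, p, 0; 0, 0, r] : Matrix (Fin 3) (Fin 3) ℝ).det with hddef
  have hsq : 0 < Real.sqrt d := Real.sqrt_pos.mpr hd
  have hc : (1 / Real.sqrt d) ≠ 0 := by positivity
  have h00 := congrFun (congrFun hσ 0) 0
  have h22 := congrFun (congrFun hσ 2) 2
  have h01 := congrFun (congrFun hσ 0) 1
  simp [pureShear, Matrix.smul_apply, Matrix.sub_apply, Matrix.one_apply, Matrix.vecHead, Matrix.vecTail] at h00 h22 h01
  have hp : p = 1 := by
    rcases h00 with h | h
    · exact absurd h hsq.ne'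
    · linarith
  have hr : r = 1 := by
    rcases h22 with h | h
    · exact absurd h hsq.ne'
    · linarith
  have hdet : d = 1 - q ^ 2 := by
    rw [hddef]
    simp [Matrix.det_fin_three, hp, hr]; ring
  have hq1 : q ^ 2 < 1 := by nlinarith
  have hpos : (0:ℝ) < 1 - q ^ 2 := by nlinarith
  have hsqp : 0 < Real.sqrt (1 - q ^ 2) := Real.sqrt_pos.mpr hpos
  have hs : s = q / Real.sqrt (1 - q ^ 2) := by
    rw [← h01, hdet]; field_simp
  have h1s : 1 + s ^ 2 = 1 / (1 - q ^ 2) := by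
    rw [hs, div_pow, Real.sq_sqrt (le_of_lt hpos)]
    field_simp; ring
  have hsr : Real.sqrt (1 + s ^ 2) = 1 / Real.sqrt (1 - q ^ 2) := by
    rw [h1s, one_div, Real.sqrt_inv, one_div]
  have hqeq : q = s / Real.sqrt (1 + s ^ 2) := by
    rw [hsr, hs]; field_simp
  refine ⟨hr, hp, hqeq, fun hs0 => ⟨?_, ?_⟩⟩
  · rw [hdet, h1s, one_div_one_div]
  · have hq0 : q ≠ 0 := by
      intro h; apply hs0; rw [hs, h, zero_div]
    rw [hdet]
    nlinarith [pow_pos (abs_pos.mpr hq0) 2, sq_abs q]
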